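/- Let a, \mu be nonnegative integers and b a positive integer. The coefficient of q^{\mu} in the formal power series W(q)^a e^{-\mu W(q)}/(1-W(q))^b equals the binomial coefficient C(b-2+\mu-a, b-2), with the convention that this binomial coefficient is 0 if \mu - a < 0 (more precisely, C(\alpha,\beta)=0 when \alpha<\beta and C(\alpha,\beta)=\alpha!/(\beta!(\alpha-\beta)!) when \alpha\geq\beta\geq 0). -/

import Mathlib

open PowerSeries Finset

/-- The tree function `W(q) = ∑_{n≥1} n^{n-1} q^n / n!`. -/
noncomputable def treeW (K : Type*) [Field K] : PowerSeries K :=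
  PowerSeries.mk fun n => if n = 0 then 0 else (n : K) ^ (n - 1) / (n.factorial : K)

/-- Formal exponential of a power series with zero constant term. -/
noncomputable def pexp {K : Type*} [Field K] (f : PowerSeries K) : PowerSeries K :=
  PowerSeries.mk fun n => ∑ k ∈ Finset.range (n + 1), PowerSeries.coeff n (f ^ k) / (k.factorial : K)

/-- Binomial coefficient with the paper's convention: `1` if `α = β`, `0` if `α < β`
or (`α > β` and `β < 0`), and the usual binomial coefficient when `α ≥ β ≥ 0`. -/
def bino (α β : ℤ) : ℚ :=
  if α = β then 1 else if α < β ∨ β < 0 then 0 else (α.toNat.choose β.toNat : ℚ)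

namespace Stmt5Aux
set_option maxHeartbeats 1000000

section Poly
open Polynomial


def fd (n : ℕ) (f : ℕ → ℚ) : ℚ := ∑ k ∈ range (n+1), (-1)^(n-k) * (n.choose k : ℚ) * f k

lemma fd_succ (n : ℕ) (f : ℕ → ℚ) : fd (n+1) f = fd n (fun k => f (k+1) - f k) := by
  unfold fd
  have hR : ∑ k ∈ range (n+1), (-1:ℚ)^(n-k) * (n.choose k : ℚ) * (f (k+1) - f k)
      = ∑ k ∈ range (n+1), (-1:ℚ)^(n-k) * (n.choose k : ℚ) * f (k+1)
        - ∑ k ∈ range (n+1), (-1:ℚ)^(n-k) * (n.choose k : ℚ) * f k := by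
    rw [← Finset.sum_sub_distrib]
    apply Finset.sum_congr rfl; intro k _; ring
  rw [hR]
  rw [Finset.sum_range_succ' (fun k => (-1:ℚ)^(n+1-k) * ((n+1).choose k : ℚ) * f k)]
  have hsplit : ∀ k, (-1:ℚ)^(n+1-(k+1)) * ((n+1).choose (k+1) : ℚ) * f (k+1)
      = (-1)^(n-k) * (n.choose k : ℚ) * f (k+1) + (-1)^(n-k) * (n.choose (k+1) : ℚ) * f (k+1) := by
    intro k
    have : n + 1 - (k+1) = n - k := by omega
    rw [this, Nat.choose_succ_succ]
    push_cast; ring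
  rw [Finset.sum_congr rfl (fun k _ => hsplit k), Finset.sum_add_distrib]
  have h2 : ∑ k ∈ range (n+1), (-1:ℚ)^(n-k) * (n.choose (k+1) : ℚ) * f (k+1)
      = ∑ k ∈ range n, (-1:ℚ)^(n-k) * (n.choose (k+1) : ℚ) * f (k+1) := by
    rw [Finset.sum_range_succ]
    simp
  have h3 : ∑ k ∈ range n, (-1:ℚ)^(n-k) * (n.choose (k+1) : ℚ) * f (k+1)
      + (-1:ℚ)^(n+1-0) * ((n+1).choose 0 : ℚ) * f 0
      = - ∑ k ∈ range (n+1), (-1:ℚ)^(n-k) * (n.choose k : ℚ) * f k := by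
    rw [Finset.sum_range_succ' (fun k => (-1:ℚ)^(n-k) * (n.choose k : ℚ) * f k), neg_add]
    have h4 : ∑ k ∈ range n, (-1:ℚ)^(n-k) * (n.choose (k+1) : ℚ) * f (k+1)
        = - ∑ k ∈ range n, (-1:ℚ)^(n-(k+1)) * (n.choose (k+1) : ℚ) * f (k+1) := by
      rw [← Finset.sum_neg_distrib]
      apply Finset.sum_congr rfl
      intro k hk
      rw [Finset.mem_range] at hk
      have : n - k = (n - (k+1)) + 1 := by omega
      rw [this]; ring
    rw [h4]
    congr 1
    simp only [Nat.sub_zero, Nat.choose_zero_right, Nat.cast_one, pow_succ]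
    ring
  linarith [h2, h3]

lemma fd_sum (n : ℕ) (m : ℕ) (g : ℕ → ℕ → ℚ) :
    fd n (fun k => ∑ i ∈ range m, g i k) = ∑ i ∈ range m, fd n (g i) := by
  unfold fd
  rw [Finset.sum_comm]
  apply Finset.sum_congr rfl
  intro k _
  rw [Finset.mul_sum]

lemma fd_pow_eq_zero : ∀ n j, j < n → ∀ c : ℚ, fd n (fun k => ((k:ℚ)+c)^j) = 0 := by
  intro n
  induction n with
  | zero => intro j hj; omega
  | succ n ih =>
    intro j hj c
    rw [fd_succ]
    have hdiff : ∀ k : ℕ, (((k+1:ℕ):ℚ)+c)^j - ((k:ℚ)+c)^j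
        = ∑ i ∈ range j, ((k:ℚ)+c)^i * (j.choose i : ℚ) := by
      intro k
      have h : (((k+1:ℕ):ℚ)+c) = ((k:ℚ)+c) + 1 := by push_cast; ring
      rw [h, add_pow]
      rw [Finset.sum_range_succ]
      simp
    have h1 : (fun k : ℕ => (((k+1:ℕ):ℚ)+c)^j - ((k:ℚ)+c)^j)
        = (fun k : ℕ => ∑ i ∈ range j, ((k:ℚ)+c)^i * (j.choose i : ℚ)) := by
      funext k; exact hdiff k
    rw [h1]
    have h2 : fd n (fun k => ∑ i ∈ range j, ((k:ℚ)+c)^i * (j.choose i : ℚ))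
        = ∑ i ∈ range j, (j.choose i : ℚ) * fd n (fun k => ((k:ℚ)+c)^i) := by
      rw [fd_sum n j (fun i k => ((k:ℚ)+c)^i * (j.choose i : ℚ))]
      apply Finset.sum_congr rfl
      intro i _
      unfold fd
      rw [Finset.mul_sum]
      apply Finset.sum_congr rfl
      intro k _; ring
    rw [h2]
    apply Finset.sum_eq_zero
    intro i hi
    rw [Finset.mem_range] at hi
    rw [ih i (by omega) c]
    ring


noncomputable def abL (n : ℕ) : ℚ[X] :=
  ∑ k ∈ range (n+1), Polynomial.C ((n.choose k : ℚ) * ((k:ℚ)+1)^(k-1)) * (Polynomial.X + Polynomial.C ((n-k : ℕ):ℚ))^(n-k)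

lemma abel_poly : ∀ n : ℕ, abL n = (Polynomial.X + Polynomial.C ((n:ℚ)+1))^n := by
  intro n
  induction n with
  | zero => simp [abL]
  | succ n ih =>
    have hchoose : ∀ k : ℕ, (n+1-k) * ((n+1).choose k) = (n+1) * (n.choose k) := by
      intro k
      rw [mul_comm, ← Nat.choose_succ_right_eq, Nat.add_one_mul_choose_eq]
    have hIHcomp : (Polynomial.aeval (Polynomial.X + 1 : ℚ[X])) (abL n) = ((Polynomial.X + 1) + Polynomial.C ((n:ℚ)+1))^n := by
      rw [ih, map_pow, map_add, aeval_X, aeval_C, Polynomial.algebraMap_eq]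
    have hLcomp : (Polynomial.aeval (Polynomial.X + 1 : ℚ[X])) (abL n)
        = ∑ k ∈ range (n+1), Polynomial.C ((n.choose k : ℚ) * ((k:ℚ)+1)^(k-1)) * (Polynomial.X + Polynomial.C (((n-k : ℕ):ℚ)+1))^(n-k) := by
      unfold abL
      rw [map_sum]
      apply Finset.sum_congr rfl
      intro k _
      rw [map_mul, map_pow, map_add, aeval_X, aeval_C, aeval_C, Polynomial.algebraMap_eq, C_add, C_1]
      ring
    have hderiv : Polynomial.derivative (abL (n+1)) = Polynomial.derivative ((Polynomial.X + Polynomial.C (((n+1:ℕ):ℚ)+1))^(n+1)) := by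
      unfold abL
      rw [map_sum]
      have hterm : ∀ k ∈ range (n+2),
          Polynomial.derivative (Polynomial.C (((n+1).choose k : ℚ) * ((k:ℚ)+1)^(k-1)) * (Polynomial.X + Polynomial.C ((n+1-k : ℕ):ℚ))^(n+1-k))
          = Polynomial.C (((n+1).choose k : ℚ) * ((k:ℚ)+1)^(k-1)) * (((n+1-k:ℕ):ℚ[X]) * (Polynomial.X + Polynomial.C ((n+1-k : ℕ):ℚ))^(n+1-k-1)) := by
        intro k _
        rw [Polynomial.derivative_C_mul, Polynomial.derivative_pow]
        simp
      rw [Finset.sum_congr rfl hterm, Finset.sum_range_succ]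
      simp only [Nat.sub_self, Nat.cast_zero, zero_mul, mul_zero, add_zero]
      have hterm2 : ∀ k ∈ range (n+1),
          Polynomial.C (((n+1).choose k : ℚ) * ((k:ℚ)+1)^(k-1)) * (((n+1-k:ℕ):ℚ[X]) * (Polynomial.X + Polynomial.C ((n+1-k : ℕ):ℚ))^(n+1-k-1))
          = Polynomial.C ((n:ℚ)+1) * (Polynomial.C ((n.choose k : ℚ) * ((k:ℚ)+1)^(k-1)) * (Polynomial.X + Polynomial.C (((n-k : ℕ):ℚ)+1))^(n-k)) := by
        intro k hk
        rw [Finset.mem_range] at hk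
        have e1 : n+1-k-1 = n-k := by omega
        have e2 : ((n+1-k : ℕ):ℚ) = ((n-k : ℕ):ℚ) + 1 := by
          have h : n+1-k = (n-k)+1 := by omega
          rw [h]; push_cast; ring
        have e3 : ((n+1-k:ℕ):ℚ[X]) = Polynomial.C ((n+1-k:ℕ):ℚ) := by
          simp [Polynomial.C_eq_natCast]
        rw [e1, e3, e2, ← mul_assoc, ← C_mul, ← mul_assoc, ← C_mul]
        congr 1
        congr 1
        have hq : (((n-k : ℕ):ℚ) + 1) * (((n+1).choose k : ℚ)) = ((n:ℚ)+1) * (n.choose k : ℚ) := by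
          have := hchoose k
          have hc : (((n+1-k) * ((n+1).choose k) : ℕ) : ℚ) = (((n+1) * (n.choose k) : ℕ) : ℚ) := by
            exact_mod_cast congrArg (Nat.cast : ℕ → ℚ) this
          push_cast at hc
          rw [e2] at hc
          linarith
        linear_combination ((k:ℚ)+1)^(k-1) * hq
      rw [Finset.sum_congr rfl hterm2, ← Finset.mul_sum, ← hLcomp, hIHcomp]
      rw [Polynomial.derivative_pow]
      simp only [Polynomial.derivative_add, Polynomial.derivative_X, Polynomial.derivative_C, add_zero, mul_one, Nat.add_sub_cancel]
      have h8 : ((n+1:ℕ):ℚ) = ((n:ℚ)+1) := by push_cast; ring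
      rw [h8]
      simp only [C_add, C_1]
      ring
    have hzero : Polynomial.derivative (abL (n+1) - (Polynomial.X + Polynomial.C (((n+1:ℕ):ℚ)+1))^(n+1)) = 0 := by
      rw [Polynomial.derivative_sub, hderiv, sub_self]
    obtain ⟨c, hc⟩ : ∃ c, abL (n+1) - (Polynomial.X + Polynomial.C (((n+1:ℕ):ℚ)+1))^(n+1) = Polynomial.C c :=
      ⟨_, Polynomial.eq_C_of_derivative_eq_zero hzero⟩
    have heval : Polynomial.eval (-(((n+1:ℕ):ℚ)+1)) (abL (n+1) - (Polynomial.X + Polynomial.C (((n+1:ℕ):ℚ)+1))^(n+1)) = 0 := by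
      rw [eval_sub]
      have hR : Polynomial.eval (-(((n+1:ℕ):ℚ)+1)) ((Polynomial.X + Polynomial.C (((n+1:ℕ):ℚ)+1))^(n+1)) = 0 := by
        rw [eval_pow, eval_add, eval_X, eval_C, neg_add_cancel]
        exact zero_pow (by omega)
      rw [hR, sub_zero]
      unfold abL
      rw [eval_finset_sum]
      have hterm : ∀ k ∈ range (n+2),
          Polynomial.eval (-(((n+1:ℕ):ℚ)+1)) (Polynomial.C (((n+1).choose k : ℚ) * ((k:ℚ)+1)^(k-1)) * (Polynomial.X + Polynomial.C ((n+1-k : ℕ):ℚ))^(n+1-k))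
          = (-1)^(n+1-k) * (((n+1).choose k : ℚ)) * ((k:ℚ)+1)^n := by
        intro k hk
        rw [Finset.mem_range] at hk
        rw [eval_mul, eval_C, eval_pow, eval_add, eval_X, eval_C]
        have e5 : (-(((n+1:ℕ):ℚ)+1) + ((n+1-k : ℕ):ℚ)) = -(((k:ℚ))+1) := by
          have h : ((n+1-k : ℕ):ℚ) = ((n:ℚ)+1) - (k:ℚ) := by
            have : ((n+1-k:ℕ):ℚ) = ((n+1:ℕ):ℚ) - (k:ℚ) := by
              rw [← Nat.cast_sub (by omega)]
            rw [this]; push_cast; ring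
          rw [h]; push_cast; ring
        rw [e5, neg_pow]
        have e6 : ((k:ℚ)+1)^(k-1) * ((k:ℚ)+1)^(n+1-k) = ((k:ℚ)+1)^n := by
          rw [← pow_add]
          rcases Nat.eq_zero_or_pos k with h0 | h0
          · subst h0; norm_num
          · congr 1; omega
        calc ((n+1).choose k : ℚ) * ((k:ℚ)+1)^(k-1) * ((-1)^(n+1-k) * ((k:ℚ)+1)^(n+1-k))
            = (-1)^(n+1-k) * ((n+1).choose k : ℚ) * (((k:ℚ)+1)^(k-1) * ((k:ℚ)+1)^(n+1-k)) := by ring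
          _ = (-1)^(n+1-k) * ((n+1).choose k : ℚ) * ((k:ℚ)+1)^n := by rw [e6]
      rw [Finset.sum_congr rfl hterm]
      exact fd_pow_eq_zero (n+1) n (by omega) 1
    rw [hc] at heval
    rw [eval_C] at heval
    rw [heval] at hc
    have : abL (n+1) = (Polynomial.X + Polynomial.C (((n+1:ℕ):ℚ)+1))^(n+1) := by
      have := sub_eq_zero.mp (by rw [hc]; simp : abL (n+1) - (Polynomial.X + Polynomial.C (((n+1:ℕ):ℚ)+1))^(n+1) = 0)
      exact this
    exact this

lemma abel_sum (n : ℕ) :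
    ∑ k ∈ range (n+1), (n.choose k : ℚ) * ((k:ℚ)+1)^(k-1) * (((n-k : ℕ):ℚ)+1)^(n-k) = ((n:ℚ)+2)^n := by
  have h := congrArg (Polynomial.eval (1:ℚ)) (abel_poly n)
  rw [eval_pow, eval_add, eval_X, eval_C] at h
  unfold abL at h
  rw [eval_finset_sum] at h
  have hterm : ∀ k ∈ range (n+1),
      Polynomial.eval (1:ℚ) (Polynomial.C ((n.choose k : ℚ) * ((k:ℚ)+1)^(k-1)) * (Polynomial.X + Polynomial.C ((n-k : ℕ):ℚ))^(n-k))
      = (n.choose k : ℚ) * ((k:ℚ)+1)^(k-1) * (((n-k : ℕ):ℚ)+1)^(n-k) := by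
    intro k _
    rw [eval_mul, eval_C, eval_pow, eval_add, eval_X, eval_C]
    ring
  rw [Finset.sum_congr rfl hterm] at h
  rw [h]; ring

end Poly


lemma coeff_pow_zero {f : ℚ⟦X⟧} (hf : constantCoeff f = 0) {k n : ℕ} (h : n < k) :
    coeff n (f ^ k) = 0 := by
  have hd : (X : ℚ⟦X⟧) ^ k ∣ f ^ k := pow_dvd_pow_of_dvd (X_dvd_iff.mpr hf) k
  rw [X_pow_dvd_iff] at hd
  exact hd n h

noncomputable def SN (f : ℚ⟦X⟧) (N : ℕ) : ℚ⟦X⟧ :=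
  ∑ k ∈ range (N+1), (k.factorial : ℚ)⁻¹ • f ^ k

lemma coeff_SN (f : ℚ⟦X⟧) (N n : ℕ) :
    coeff n (SN f N) = ∑ k ∈ range (N+1), coeff n (f^k) / (k.factorial : ℚ) := by
  unfold SN
  rw [map_sum]
  apply Finset.sum_congr rfl
  intro k _
  rw [coeff_smul, smul_eq_mul, div_eq_inv_mul]

lemma coeff_pexp_SN {f : ℚ⟦X⟧} (hf : constantCoeff f = 0) {n N : ℕ} (hnN : n ≤ N) :
    coeff n (pexp f) = coeff n (SN f N) := by
  rw [coeff_SN]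
  unfold pexp
  rw [coeff_mk]
  apply Finset.sum_subset
  · exact Finset.range_subset_range.mpr (by omega)
  · intro k hk hk2
    rw [Finset.mem_range] at hk hk2
    rw [coeff_pow_zero hf (by omega)]
    simp

lemma D_SN (f : ℚ⟦X⟧) (N : ℕ) :
    d⁄dX ℚ (SN f (N+1)) = d⁄dX ℚ f * SN f N := by
  unfold SN
  rw [map_sum]
  have hterm : ∀ k ∈ range (N+2),
      d⁄dX ℚ ((k.factorial : ℚ)⁻¹ • f ^ k)
      = (k.factorial : ℚ)⁻¹ • ((k:ℚ⟦X⟧) * (f ^ (k-1) * d⁄dX ℚ f)) := by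
    intro k _
    rw [Derivation.map_smul, Derivation.leibniz_pow]
    congr 1
    rw [smul_eq_mul, nsmul_eq_mul]
  rw [Finset.sum_congr rfl hterm,
    Finset.sum_range_succ' (fun k => (k.factorial : ℚ)⁻¹ • ((k:ℚ⟦X⟧) * (f ^ (k-1) * d⁄dX ℚ f)))]
  simp only [Nat.cast_zero, zero_mul, smul_zero, add_zero]
  have hterm2 : ∀ k ∈ range (N+1),
      ((k+1).factorial : ℚ)⁻¹ • (((k+1:ℕ):ℚ⟦X⟧) * (f ^ (k+1-1) * d⁄dX ℚ f))
      = ((k.factorial : ℚ)⁻¹ • f ^ k) * d⁄dX ℚ f := by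
    intro k _
    rw [Nat.add_sub_cancel]
    have hcast : ((k+1:ℕ):ℚ⟦X⟧) = PowerSeries.C ((k+1:ℕ):ℚ) := by
      simp
    rw [hcast, ← PowerSeries.smul_eq_C_mul, smul_smul, smul_mul_assoc]
    congr 1
    rw [Nat.factorial_succ]
    have h1 : ((k+1) * k.factorial : ℕ) ≠ 0 := by positivity
    have h2 : (k.factorial : ℚ) ≠ 0 := by exact_mod_cast Nat.factorial_ne_zero k
    push_cast
    field_simp
  rw [Finset.sum_congr rfl hterm2, ← Finset.sum_mul, mul_comm]


lemma D_pexp {f : ℚ⟦X⟧} (hf : constantCoeff f = 0) :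
    d⁄dX ℚ (pexp f) = d⁄dX ℚ f * pexp f := by
  ext n
  rw [PowerSeries.coeff_derivative, coeff_pexp_SN hf (le_refl (n+1)),
    ← PowerSeries.coeff_derivative, D_SN]
  rw [PowerSeries.coeff_mul, PowerSeries.coeff_mul]
  apply Finset.sum_congr rfl
  intro p hp
  rw [Finset.HasAntidiagonal.mem_antidiagonal] at hp
  congr 1
  rw [coeff_pexp_SN hf (show p.2 ≤ n by omega)]

lemma constantCoeff_pexp (f : ℚ⟦X⟧) : constantCoeff (pexp f) = 1 := by
  have : constantCoeff (pexp f) = coeff 0 (pexp f) := by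
    rw [PowerSeries.coeff_zero_eq_constantCoeff]
  rw [this]
  unfold pexp
  rw [coeff_mk]
  simp

lemma pexp_zero : pexp (0 : ℚ⟦X⟧) = 1 := by
  ext n
  unfold pexp
  rw [coeff_mk]
  rcases Nat.eq_zero_or_pos n with h | h
  · subst h; simp
  · rw [PowerSeries.coeff_one, if_neg (by omega)]
    apply Finset.sum_eq_zero
    intro k hk
    rcases Nat.eq_zero_or_pos k with h0 | h0
    · subst h0; simp [PowerSeries.coeff_one, Nat.pos_iff_ne_zero.mp h]
    · rw [zero_pow (by omega)]
      simp

lemma ode_zero {h u : ℚ⟦X⟧} (h0 : constantCoeff h = 0) (hD : d⁄dX ℚ h = u * h) :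
    h = 0 := by
  ext n
  induction n using Nat.strong_induction_on with
  | _ n ih =>
    match n with
    | 0 => rw [PowerSeries.coeff_zero_eq_constantCoeff, h0]; simp
    | Nat.succ m =>
      have h1 : coeff m (d⁄dX ℚ h) = coeff (m+1) h * ((m:ℚ)+1) :=
        PowerSeries.coeff_derivative h m
      rw [hD, PowerSeries.coeff_mul] at h1
      have h2 : ∑ p ∈ Finset.HasAntidiagonal.antidiagonal m, coeff p.1 u * coeff p.2 h = 0 := by
        apply Finset.sum_eq_zero
        intro p hp
        rw [Finset.HasAntidiagonal.mem_antidiagonal] at hp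
        rw [ih p.2 (by omega)]
        simp
      rw [h2] at h1
      have h3 : ((m:ℚ)+1) ≠ 0 := by positivity
      have h5 := mul_eq_zero.mp h1.symm
      rcases h5 with h4 | h4
      · rw [h4]; simp
      · exact absurd h4 h3

lemma pexp_add {f g : ℚ⟦X⟧} (hf : constantCoeff f = 0) (hg : constantCoeff g = 0) :
    pexp (f + g) = pexp f * pexp g := by
  have hfg : constantCoeff (f + g) = 0 := by rw [map_add, hf, hg]; ring
  have key : pexp (f+g) - pexp f * pexp g = 0 := by
    apply ode_zero (u := d⁄dX ℚ (f+g))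
    · rw [map_sub, map_mul, constantCoeff_pexp, constantCoeff_pexp, constantCoeff_pexp]; ring
    · rw [map_sub, D_pexp hfg, Derivation.leibniz, D_pexp hf, D_pexp hg]
      simp only [smul_eq_mul, map_add]
      ring
  exact sub_eq_zero.mp key
  


lemma constantCoeff_W : constantCoeff (treeW ℚ) = 0 := by
  rw [← PowerSeries.coeff_zero_eq_constantCoeff_apply]
  unfold treeW
  rw [coeff_mk]
  simp

lemma constantCoeff_smul_W (x : ℚ) : constantCoeff (x • treeW ℚ) = 0 := by
  rw [← PowerSeries.coeff_zero_eq_constantCoeff_apply, PowerSeries.coeff_smul, smul_eq_mul,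
    PowerSeries.coeff_zero_eq_constantCoeff_apply, constantCoeff_W, mul_zero]

lemma coeff_W (n : ℕ) : coeff n (treeW ℚ)
    = if n = 0 then 0 else (n:ℚ)^(n-1)/(n.factorial : ℚ) := by
  unfold treeW; rw [coeff_mk]

lemma coeff_E : ∀ m : ℕ, coeff m (pexp (treeW ℚ)) = ((m:ℚ)+1)^(m-1) / (m.factorial : ℚ) := by
  intro m
  induction m using Nat.strong_induction_on with
  | _ m ih =>
    match m with
    | 0 =>
      rw [PowerSeries.coeff_zero_eq_constantCoeff_apply, constantCoeff_pexp]
      norm_num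
    | Nat.succ m =>
      have hD := D_pexp constantCoeff_W
      have h1 : coeff m (d⁄dX ℚ (pexp (treeW ℚ)))
          = coeff (m+1) (pexp (treeW ℚ)) * ((m:ℚ)+1) := PowerSeries.coeff_derivative _ m
      rw [hD, PowerSeries.coeff_mul] at h1
      rw [Finset.Nat.sum_antidiagonal_eq_sum_range_succ_mk] at h1
      have hterm : ∀ j ∈ range (m+1),
          coeff j (d⁄dX ℚ (treeW ℚ)) * coeff (m-j) (pexp (treeW ℚ))
          = ((j:ℚ)+1)^j/(j.factorial:ℚ) * ((((m-j:ℕ):ℚ)+1)^(m-j-1)/(((m-j).factorial):ℚ)) := by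
        intro j hj
        rw [Finset.mem_range] at hj
        rw [PowerSeries.coeff_derivative, coeff_W, if_neg (by omega), ih (m-j) (by omega)]
        have e1 : ((j+1:ℕ):ℚ) = (j:ℚ)+1 := by push_cast; ring
        have e2 : (j+1) - 1 = j := by omega
        have e3 : ((j+1).factorial : ℚ) = ((j:ℚ)+1) * (j.factorial : ℚ) := by
          rw [Nat.factorial_succ]; push_cast; ring
        rw [e2, e1, e3]
        have h4 : (j.factorial : ℚ) ≠ 0 := by exact_mod_cast Nat.factorial_ne_zero j
        have h5 : ((j:ℚ)+1) ≠ 0 := by positivity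
        field_simp
      rw [Finset.sum_congr rfl hterm] at h1
      -- the Abel sum
      have habel : ∑ j ∈ range (m+1), ((j:ℚ)+1)^j * (((m-j:ℕ):ℚ)+1)^(m-j-1) * (m.choose j : ℚ)
          = ((m:ℚ)+2)^m := by
        have h0 := Finset.sum_range_reflect
          (fun k => (m.choose k : ℚ) * ((k:ℚ)+1)^(k-1) * (((m-k : ℕ):ℚ)+1)^(m-k)) (m+1)
        rw [abel_sum m] at h0
        rw [← h0]
        apply Finset.sum_congr rfl
        intro j hj
        rw [Finset.mem_range] at hj
        have e1 : m + 1 - 1 - j = m - j := by omega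
        have e2 : m - (m - j) = j := by omega
        have e3 : m.choose (m - j) = m.choose j := Nat.choose_symm (show j ≤ m by omega)
        simp only [e1, e2, e3]
        ring
      have hmf : (m.factorial : ℚ) ≠ 0 := by exact_mod_cast Nat.factorial_ne_zero m
      have hsum2 : ∑ j ∈ range (m+1),
          ((j:ℚ)+1)^j/(j.factorial:ℚ) * ((((m-j:ℕ):ℚ)+1)^(m-j-1)/(((m-j).factorial):ℚ))
          = ((m:ℚ)+2)^m / (m.factorial : ℚ) := by
        rw [eq_div_iff hmf, ← habel, Finset.sum_mul]
        apply Finset.sum_congr rfl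
        intro j hj
        rw [Finset.mem_range] at hj
        have hcf : ((m.factorial : ℕ) : ℚ)
            = (m.choose j : ℚ) * (j.factorial : ℚ) * ((m-j).factorial : ℚ) := by
          rw [← Nat.choose_mul_factorial_mul_factorial (show j ≤ m by omega)]
          push_cast; ring
        have h4 : (j.factorial : ℚ) ≠ 0 := by exact_mod_cast Nat.factorial_ne_zero j
        have h5 : ((m-j).factorial : ℚ) ≠ 0 := by exact_mod_cast Nat.factorial_ne_zero (m-j)
        rw [hcf]
        field_simp
      rw [hsum2] at h1
      rw [div_eq_iff hmf] at h1
      have hm1 : ((m:ℚ)+1) ≠ 0 := by positivity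
      have he : m.succ - 1 = m := by omega
      have hfs : ((m.succ.factorial : ℕ):ℚ) ≠ 0 := by exact_mod_cast Nat.factorial_ne_zero _
      rw [he, eq_div_iff hfs]
      have hms : ((m.succ.factorial : ℕ):ℚ) = ((m:ℚ)+1) * (m.factorial:ℚ) := by
        rw [Nat.factorial_succ]; push_cast; ring
      rw [hms]
      push_cast
      linear_combination -h1


lemma funcEq : treeW ℚ = X * pexp (treeW ℚ) := by
  ext n
  match n with
  | 0 =>
    rw [coeff_W]
    simp [PowerSeries.coeff_zero_mul_X]
  | Nat.succ n =>
    rw [PowerSeries.coeff_succ_X_mul, coeff_E, coeff_W, if_neg (by omega)]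
    have e1 : ((n+1:ℕ):ℚ) = (n:ℚ)+1 := by push_cast; ring
    have e2 : (n+1) - 1 = n := by omega
    rw [e1, e2, Nat.factorial_succ]
    rcases Nat.eq_zero_or_pos n with h | h
    · subst h; norm_num
    · have e3 : ((n:ℚ)+1)^n = ((n:ℚ)+1) * ((n:ℚ)+1)^(n-1) := by
        rw [← pow_succ']
        congr 1
        omega
      rw [e3]
      have h4 : (n.factorial : ℚ) ≠ 0 := by exact_mod_cast Nat.factorial_ne_zero n
      have h5 : ((n:ℚ)+1) ≠ 0 := by positivity
      push_cast
      field_simp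

lemma constantCoeff_one_sub_W : constantCoeff (1 - treeW ℚ) = 1 := by
  rw [map_sub, constantCoeff_W, map_one, sub_zero]

lemma hV : (1 - treeW ℚ) * (1 - treeW ℚ)⁻¹ = 1 :=
  PowerSeries.mul_inv_cancel _ (by rw [constantCoeff_one_sub_W]; norm_num)

lemma constantCoeff_V : constantCoeff (1 - treeW ℚ)⁻¹ = 1 := by
  rw [PowerSeries.constantCoeff_inv, constantCoeff_one_sub_W]
  norm_num

lemma hDW : d⁄dX ℚ (treeW ℚ) = pexp (treeW ℚ) * (1 - treeW ℚ)⁻¹ := by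
  have h1 : d⁄dX ℚ (treeW ℚ) * (1 - treeW ℚ) = pexp (treeW ℚ) := by
    have h0 := congrArg (d⁄dX ℚ) funcEq
    rw [Derivation.leibniz, D_pexp constantCoeff_W, PowerSeries.derivative_X] at h0
    simp only [smul_eq_mul, mul_one] at h0
    have h2 : (X : ℚ⟦X⟧) * (d⁄dX ℚ (treeW ℚ) * pexp (treeW ℚ))
        = d⁄dX ℚ (treeW ℚ) * (X * pexp (treeW ℚ)) := by ring
    rw [h2, ← funcEq] at h0
    linear_combination h0
  calc d⁄dX ℚ (treeW ℚ) = d⁄dX ℚ (treeW ℚ) * ((1 - treeW ℚ) * (1 - treeW ℚ)⁻¹) := by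
        rw [hV, mul_one]
    _ = (d⁄dX ℚ (treeW ℚ) * (1 - treeW ℚ)) * (1 - treeW ℚ)⁻¹ := by ring
    _ = pexp (treeW ℚ) * (1 - treeW ℚ)⁻¹ := by rw [h1]

lemma hDV : d⁄dX ℚ (1 - treeW ℚ)⁻¹
    = pexp (treeW ℚ) * ((1 - treeW ℚ)⁻¹)^3 := by
  rw [PowerSeries.derivative_inv', map_sub, Derivation.map_one_eq_zero, hDW]
  ring


noncomputable def Ex (x : ℚ) : ℚ⟦X⟧ := pexp (x • treeW ℚ)

lemma Ex_mul (x y : ℚ) : Ex x * Ex y = Ex (x+y) := by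
  rw [Ex, Ex, Ex, add_smul]
  exact (pexp_add (constantCoeff_smul_W x) (constantCoeff_smul_W y)).symm

lemma Ex_one : Ex 1 = pexp (treeW ℚ) := by rw [Ex, one_smul]

lemma D_Ex (x : ℚ) : d⁄dX ℚ (Ex x) = PowerSeries.C x * d⁄dX ℚ (treeW ℚ) * Ex x := by
  rw [Ex, D_pexp (constantCoeff_smul_W x), Derivation.map_smul, PowerSeries.smul_eq_C_mul]

lemma DD (x : ℚ) (b : ℕ) :
    d⁄dX ℚ (Ex x * ((1 - treeW ℚ)⁻¹)^b)
    = PowerSeries.C x * (Ex (x+1) * ((1 - treeW ℚ)⁻¹)^(b+1))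
      + PowerSeries.C (b:ℚ) * (Ex (x+1) * ((1 - treeW ℚ)⁻¹)^(b+2)) := by
  have h1 : Ex (x+1) = Ex x * pexp (treeW ℚ) := by rw [← Ex_one, Ex_mul]
  rw [Derivation.leibniz, Derivation.leibniz_pow, hDV, D_Ex, hDW, h1]
  simp only [smul_eq_mul, nsmul_eq_mul, map_natCast]
  match b with
  | 0 => push_cast; ring
  | Nat.succ b' =>
    have e1 : b' + 1 - 1 = b' := by omega
    rw [e1]
    push_cast
    simp only [Nat.succ_eq_add_one, pow_succ]
    ring

lemma crec (m b : ℕ) :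
    coeff (m+1) (Ex (-((m:ℚ)+1)) * ((1 - treeW ℚ)⁻¹)^b) * ((m:ℚ)+1)
    = (-((m:ℚ)+1)) * coeff m (Ex (-(m:ℚ)) * ((1 - treeW ℚ)⁻¹)^(b+1))
      + (b:ℚ) * coeff m (Ex (-(m:ℚ)) * ((1 - treeW ℚ)⁻¹)^(b+2)) := by
  have h0 : coeff m (d⁄dX ℚ (Ex (-((m:ℚ)+1)) * ((1 - treeW ℚ)⁻¹)^b))
      = coeff (m+1) (Ex (-((m:ℚ)+1)) * ((1 - treeW ℚ)⁻¹)^b) * ((m:ℚ)+1) :=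
    PowerSeries.coeff_derivative _ m
  rw [DD] at h0
  have e1 : (-((m:ℚ)+1)) + 1 = -(m:ℚ) := by ring
  rw [e1] at h0
  rw [← h0, map_add, PowerSeries.coeff_C_mul, PowerSeries.coeff_C_mul]

lemma bino_self (α : ℤ) : bino α α = 1 := by unfold bino; simp

lemma bino_nat (p q : ℕ) (h : q ≤ p) : bino (p:ℤ) (q:ℤ) = (p.choose q : ℚ) := by
  unfold bino
  rcases eq_or_lt_of_le h with h1 | h1
  · subst h1; simp
  · rw [if_neg (by exact_mod_cast Nat.ne_of_gt h1), if_neg (by push_neg; omega)]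
    simp

lemma bino_zero_right (p : ℕ) : bino (p:ℤ) 0 = 1 := by
  have h0 : ((0:ℕ):ℤ) = (0:ℤ) := by norm_num
  rw [← h0, bino_nat p 0 (by omega), Nat.choose_zero_right]
  norm_num

lemma bino_step (m b : ℕ) (hb : 1 ≤ b) :
    bino ((b:ℤ)+(m:ℤ)-1) ((b:ℤ)-2) * ((m:ℚ)+1)
      = (-((m:ℚ)+1)) * bino ((b:ℤ)+(m:ℤ)-1) ((b:ℤ)-1) + (b:ℚ) * bino ((b:ℤ)+(m:ℤ)) (b:ℤ) := by
  match b, hb with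
  | 1, _ =>
    have e1 : ((1:ℕ):ℤ)+(m:ℤ)-1 = ((m:ℕ):ℤ) := by push_cast; ring
    have e2 : ((1:ℕ):ℤ)-2 = (-1:ℤ) := by norm_num
    have e3 : ((1:ℕ):ℤ)-1 = (0:ℤ) := by norm_num
    have e4 : ((1:ℕ):ℤ)+(m:ℤ) = (((m+1:ℕ)):ℤ) := by push_cast; ring
    rw [e1, e2, e3, e4]
    have hA : bino ((m:ℕ):ℤ) (-1) = 0 := by
      unfold bino
      rw [if_neg (by omega), if_pos (by right; omega)]
    have hB : bino ((m:ℕ):ℤ) 0 = 1 := bino_zero_right m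
    have hC : bino (((m+1:ℕ)):ℤ) ((1:ℕ):ℤ) = ((m+1).choose 1 : ℚ) := bino_nat (m+1) 1 (by omega)
    rw [hA, hB, hC, Nat.choose_one_right]
    push_cast
    ring
  | (b''+2), _ =>
    have e1 : (((b''+2:ℕ)):ℤ)+(m:ℤ)-1 = (((b''+m+1:ℕ)):ℤ) := by push_cast; ring
    have e2 : (((b''+2:ℕ)):ℤ)-2 = ((b'':ℕ):ℤ) := by push_cast; ring
    have e3 : (((b''+2:ℕ)):ℤ)-1 = (((b''+1:ℕ)):ℤ) := by push_cast; ring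
    have e4 : (((b''+2:ℕ)):ℤ)+(m:ℤ) = (((b''+m+2:ℕ)):ℤ) := by push_cast; ring
    rw [e1, e2, e3, e4,
      bino_nat (b''+m+1) b'' (by omega), bino_nat (b''+m+1) (b''+1) (by omega),
      bino_nat (b''+m+2) (b''+2) (by omega)]
    have hPascal : (b''+m+2).choose (b''+1) = (b''+m+1).choose b'' + (b''+m+1).choose (b''+1) := by
      have h := Nat.choose_succ_succ (b''+m+1) b''
      convert h using 2 <;> omega
    have hAbs : (b''+m+2).choose (b''+2) * (b''+2) = (b''+m+2).choose (b''+1) * (m+1) := by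
      have h := Nat.choose_succ_right_eq (b''+m+2) (b''+1)
      have hsub : (b''+m+2) - (b''+1) = m+1 := by omega
      rw [hsub] at h
      convert h using 2 <;> omega
    have hPq : ((b''+m+2).choose (b''+1) : ℚ)
        = ((b''+m+1).choose b'' : ℚ) + ((b''+m+1).choose (b''+1) : ℚ) := by
      exact_mod_cast congrArg (Nat.cast : ℕ → ℚ) hPascal
    have hAq : ((b''+m+2).choose (b''+2) : ℚ) * ((b'':ℚ)+2)
        = ((b''+m+2).choose (b''+1):ℚ) * ((m:ℚ)+1) := by
      have h := congrArg (Nat.cast : ℕ → ℚ) hAbs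
      push_cast at h
      linarith [h]
    push_cast
    linear_combination (-((m:ℚ)+1)) * hPq - hAq

lemma cval : ∀ m b : ℕ, 1 ≤ b →
    coeff m (Ex (-(m:ℚ)) * ((1 - treeW ℚ)⁻¹)^b) = bino ((b:ℤ)-2+(m:ℤ)) ((b:ℤ)-2) := by
  intro m
  induction m with
  | zero =>
    intro b hb
    have h0 : ((b:ℤ)-2+((0:ℕ):ℤ)) = (b:ℤ)-2 := by push_cast; ring
    rw [h0, bino_self]
    rw [PowerSeries.coeff_zero_eq_constantCoeff_apply, map_mul, map_pow, constantCoeff_V]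
    have h1 : Ex (-((0:ℕ):ℚ)) = 1 := by
      rw [Ex]
      norm_num
      exact pexp_zero
    rw [h1]
    simp
  | succ m ih =>
    intro b hb
    have hm1 : ((m:ℚ)+1) ≠ 0 := by positivity
    have hr := crec m b
    rw [ih (b+1) (by omega), ih (b+2) (by omega)] at hr
    have hcast : ((m+1:ℕ):ℚ) = (m:ℚ)+1 := by push_cast; ring
    have hgoal : coeff (m+1) (Ex (-((m+1:ℕ):ℚ)) * ((1 - treeW ℚ)⁻¹)^b) * ((m:ℚ)+1)
        = (-((m:ℚ)+1)) * bino ((b:ℤ)+(m:ℤ)-1) ((b:ℤ)-1) + (b:ℚ) * bino ((b:ℤ)+(m:ℤ)) (b:ℤ) := by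
      rw [hcast]
      convert hr using 3 <;> · congr 1 <;> push_cast <;> try ring
    have hstep := bino_step m b hb
    have hcomb := hgoal.trans hstep.symm
    have hfin := mul_right_cancel₀ hm1 hcomb
    have hidx : ((b:ℤ)-2+((m+1:ℕ):ℤ)) = (b:ℤ)+(m:ℤ)-1 := by push_cast; ring
    rw [hidx]
    exact hfin

lemma W_pow : ∀ a : ℕ, (treeW ℚ)^a = X^a * Ex (a:ℚ)
  | 0 => by
    have h0 : Ex ((0:ℕ):ℚ) = 1 := by
      rw [Ex]; norm_num; exact pexp_zero
    rw [h0]; norm_num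
  | (a+1) => by
    have hW : (treeW ℚ)^(a+1) = (treeW ℚ)^a * treeW ℚ := by ring
    rw [hW, W_pow a, funcEq]
    have hx : Ex ((a:ℕ):ℚ) * pexp (treeW ℚ) = Ex (((a+1:ℕ)):ℚ) := by
      rw [← Ex_one, Ex_mul]
      congr 1
      push_cast; ring
    calc X^a * Ex ((a:ℕ):ℚ) * (X * pexp (treeW ℚ))
        = X^(a+1) * (Ex ((a:ℕ):ℚ) * pexp (treeW ℚ)) := by ring
      _ = X^(a+1) * Ex (((a+1:ℕ)):ℚ) := by rw [hx]

theorem main (a μ : ℕ) (b : ℕ) (hb : 0 < b) :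
    PowerSeries.coeff μ
        ((treeW ℚ) ^ a * pexp (-((μ : ℚ) • treeW ℚ)) * ((1 - treeW ℚ)⁻¹) ^ b)
      = bino ((b : ℤ) - 2 + (μ : ℤ) - (a : ℤ)) ((b : ℤ) - 2) := by
  have hpe : pexp (-((μ : ℚ) • treeW ℚ)) = Ex (-(μ:ℚ)) := by
    rw [Ex, neg_smul]
  have harr : (treeW ℚ) ^ a * pexp (-((μ : ℚ) • treeW ℚ)) * ((1 - treeW ℚ)⁻¹) ^ b
      = X^a * (Ex ((a:ℚ) + (-(μ:ℚ))) * ((1 - treeW ℚ)⁻¹) ^ b) := by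
    rw [hpe, W_pow a, ← Ex_mul]
    ring
  rw [harr]
  by_cases hle : a ≤ μ
  · obtain ⟨m, rfl⟩ : ∃ m, μ = a + m := ⟨μ - a, by omega⟩
    have hx2 : ((a:ℚ) + (-(((a+m:ℕ)):ℚ))) = -((m:ℕ):ℚ) := by push_cast; ring
    rw [hx2]
    have hcoeff : coeff (a+m) ((X:ℚ⟦X⟧)^a * (Ex (-((m:ℕ):ℚ)) * ((1 - treeW ℚ)⁻¹) ^ b))
        = coeff m (Ex (-((m:ℕ):ℚ)) * ((1 - treeW ℚ)⁻¹) ^ b) := by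
      rw [show a + m = m + a from by omega]
      exact PowerSeries.coeff_X_pow_mul _ a m
    rw [hcoeff, cval m b hb]
    congr 1
    push_cast
    ring
  · have hzero : coeff μ ((X:ℚ⟦X⟧)^a * (Ex ((a:ℚ) + (-(μ:ℚ))) * ((1 - treeW ℚ)⁻¹) ^ b)) = 0 := by
      rw [PowerSeries.coeff_X_pow_mul']
      rw [if_neg (by omega)]
    rw [hzero]
    unfold bino
    rw [if_neg (by omega), if_pos (by left; omega)]

end Stmt5Aux

theorem stmt5 (a μ : ℕ) (b : ℕ) (hb : 0 < b) :
    PowerSeries.coeff μ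
        ((treeW ℚ) ^ a * pexp (-((μ : ℚ) • treeW ℚ)) * ((1 - treeW ℚ)⁻¹) ^ b)
      = bino ((b : ℤ) - 2 + (μ : ℤ) - (a : ℤ)) ((b : ℤ) - 2) := by
  exact Stmt5Aux.main a μ b hb
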